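/- Let X = U Σ Vᴴ be a singular value decomposition of a complex N×N matrix X, with Σ = diag(σ₁,…,σ_N). For τ ≥ 0, the matrix Z = U D_τ(Σ) Vᴴ with D_τ(Σ) = diag(max(σᵢ−τ,0)) is the unique minimizer over Z' of τ‖Z'‖_* + (1/2)‖X − Z'‖_F², where ‖·‖_* is the nuclear norm and ‖·‖_F the Frobenius norm. -/

import Mathlib

open Matrix
open scoped ComplexOrder

/-- Frobenius norm of a complex matrix. -/
noncomputable def frobNorm {N : ℕ} (A : Matrix (Fin N) (Fin N) ℂ) : ℝ :=
  Real.sqrt (Matrix.trace (Aᴴ * A)).re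

/-- Nuclear norm of a complex square matrix: the trace of `√(AᴴA)`. -/
noncomputable def nuclearNorm {N : ℕ} (A : Matrix (Fin N) (Fin N) ℂ) : ℝ :=
  (Matrix.trace
    (((Matrix.posSemidef_conjTranspose_mul_self A).1.eigenvectorUnitary : Matrix (Fin N) (Fin N) ℂ) *
      Matrix.diagonal (((↑) : ℝ → ℂ) ∘ Real.sqrt ∘
        (Matrix.posSemidef_conjTranspose_mul_self A).1.eigenvalues) *
      (star (Matrix.posSemidef_conjTranspose_mul_self A).1.eigenvectorUnitary :
        Matrix (Fin N) (Fin N) ℂ))).re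

namespace SVS

variable {N : ℕ}

/-- squared Frobenius norm as a real number -/
noncomputable def F2 (A : Matrix (Fin N) (Fin N) ℂ) : ℝ := (Matrix.trace (Aᴴ * A)).re

lemma F2_eq_sum (A : Matrix (Fin N) (Fin N) ℂ) :
    F2 A = ∑ j, ∑ i, Complex.normSq (A i j) := by
  unfold F2
  rw [Matrix.trace, Complex.re_sum]
  refine Finset.sum_congr rfl fun j _ => ?_
  rw [Matrix.diag_apply, Matrix.mul_apply, Complex.re_sum]
  refine Finset.sum_congr rfl fun i _ => ?_
  simp [Matrix.conjTranspose_apply, Complex.normSq_apply, Complex.mul_re]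

lemma F2_nonneg (A : Matrix (Fin N) (Fin N) ℂ) : 0 ≤ F2 A := by
  rw [F2_eq_sum]
  exact Finset.sum_nonneg fun j _ => Finset.sum_nonneg fun i _ => Complex.normSq_nonneg _

lemma F2_eq_zero {A : Matrix (Fin N) (Fin N) ℂ} (h : F2 A = 0) : A = 0 := by
  rw [F2_eq_sum] at h
  ext i j
  have h1 := (Finset.sum_eq_zero_iff_of_nonneg (fun j _ => Finset.sum_nonneg
    fun i _ => Complex.normSq_nonneg _)).mp h j (Finset.mem_univ j)
  have h2 := (Finset.sum_eq_zero_iff_of_nonneg (fun i _ => Complex.normSq_nonneg _)).mp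
    h1 i (Finset.mem_univ i)
  simpa [Complex.normSq_eq_zero] using h2

lemma re_trace_conj_sym (A B : Matrix (Fin N) (Fin N) ℂ) :
    (Matrix.trace (Bᴴ * A)).re = (Matrix.trace (Aᴴ * B)).re := by
  have h : Bᴴ * A = (Aᴴ * B)ᴴ := by simp [Matrix.conjTranspose_mul]
  rw [h, Matrix.trace_conjTranspose]
  simp

lemma F2_sub_expand (A B : Matrix (Fin N) (Fin N) ℂ) :
    F2 (A - B) = F2 A - 2 * (Matrix.trace (Aᴴ * B)).re + F2 B := by
  unfold F2
  rw [Matrix.conjTranspose_sub, Matrix.sub_mul, Matrix.mul_sub, Matrix.mul_sub,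
    Matrix.trace_sub, Matrix.trace_sub, Matrix.trace_sub]
  simp only [Complex.sub_re]
  rw [re_trace_conj_sym B A]
  ring


lemma re_dot_nonneg (x : Fin N → ℂ) : 0 ≤ (dotProduct (star x) x).re := by
  have := dotProduct_star_self_nonneg x
  exact (Complex.le_def.mp this).1

lemma star_dot_comm (x y : Fin N → ℂ) :
    dotProduct (star y) x = star (dotProduct (star x) y) := by
  rw [Matrix.star_dotProduct]

lemma re_dotProduct_le (M : Matrix (Fin N) (Fin N) ℂ)
    (hM : (1 - Mᴴ * M).PosSemidef) (x : Fin N → ℂ) :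
    (dotProduct (star x) (M *ᵥ x)).re ≤ (dotProduct (star x) x).re := by
  set y := M *ᵥ x with hy
  have hyy : (dotProduct (star y) y).re ≤ (dotProduct (star x) x).re := by
    have h0 := (Complex.le_def.mp (hM.dotProduct_mulVec_nonneg x)).1
    have hexp : dotProduct (star x) ((1 - Mᴴ * M) *ᵥ x)
        = dotProduct (star x) x - dotProduct (star y) y := by
      rw [Matrix.sub_mulVec, dotProduct_sub, Matrix.one_mulVec]
      congr 1
      rw [hy, Matrix.star_mulVec, ← Matrix.dotProduct_mulVec, Matrix.mulVec_mulVec]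
    rw [hexp] at h0
    simp only [Complex.zero_re, Complex.sub_re] at h0
    linarith
  have hsq := re_dot_nonneg (x - y)
  have hexp2 : (dotProduct (star (x - y)) (x - y)).re
      = (dotProduct (star x) x).re - 2 * (dotProduct (star x) y).re
        + (dotProduct (star y) y).re := by
    rw [star_sub, sub_dotProduct, dotProduct_sub, dotProduct_sub]
    have := star_dot_comm x y
    simp only [Complex.sub_re]
    rw [show dotProduct (star y) x = star (dotProduct (star x) y) from
      star_dot_comm x y]
    simp only [Complex.star_def, Complex.conj_re]
    ring
  linarith


/-- square root of a positive semidefinite matrix, via its spectral decomposition -/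
noncomputable def _root_.Matrix.PosSemidef.sqrt {H : Matrix (Fin N) (Fin N) ℂ}
    (hH : H.PosSemidef) : Matrix (Fin N) (Fin N) ℂ :=
  (hH.1.eigenvectorUnitary : Matrix (Fin N) (Fin N) ℂ) *
    Matrix.diagonal (((↑) : ℝ → ℂ) ∘ Real.sqrt ∘ hH.1.eigenvalues) *
    (star hH.1.eigenvectorUnitary : Matrix (Fin N) (Fin N) ℂ)

open scoped MatrixOrder in
lemma _root_.Matrix.PosSemidef.sqrt_eq_cfc {H : Matrix (Fin N) (Fin N) ℂ}
    (hH : H.PosSemidef) : hH.sqrt = CFC.sqrt H := by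
  rw [CFC.sqrt_eq_cfc, cfc_nnreal_eq_real _ H hH.nonneg, hH.1.cfc_eq, IsHermitian.cfc,
    Unitary.conjStarAlgAut_apply, Matrix.PosSemidef.sqrt]
  congr 3
  funext i
  simp [Real.coe_sqrt, Real.coe_toNNReal', max_eq_left (hH.eigenvalues_nonneg i)]

open scoped MatrixOrder in
lemma _root_.Matrix.PosSemidef.posSemidef_sqrt {H : Matrix (Fin N) (Fin N) ℂ}
    (hH : H.PosSemidef) : hH.sqrt.PosSemidef := by
  rw [hH.sqrt_eq_cfc]
  exact Matrix.nonneg_iff_posSemidef.mp (CFC.sqrt_nonneg H)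

open scoped MatrixOrder in
lemma _root_.Matrix.PosSemidef.sqrt_mul_self {H : Matrix (Fin N) (Fin N) ℂ}
    (hH : H.PosSemidef) : hH.sqrt * hH.sqrt = H := by
  rw [hH.sqrt_eq_cfc]
  exact CFC.sqrt_mul_sqrt_self H hH.nonneg

open scoped MatrixOrder in
lemma _root_.Matrix.PosSemidef.eq_sqrt_of_sq_eq {A H : Matrix (Fin N) (Fin N) ℂ}
    (hA : A.PosSemidef) (hH : H.PosSemidef) (h : A ^ 2 = H) : A = hH.sqrt := by
  rw [hH.sqrt_eq_cfc]
  exact (CFC.sqrt_unique (by rw [← pow_two]; exact h) (Matrix.nonneg_iff_posSemidef.mpr hA)).symm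

lemma re_trace_mul_le (M P : Matrix (Fin N) (Fin N) ℂ)
    (hM : (1 - Mᴴ * M).PosSemidef) (hP : P.PosSemidef) :
    (Matrix.trace (M * P)).re ≤ (Matrix.trace P).re := by
  set Q := hP.sqrt with hQdef
  have hQ : Q.PosSemidef := hP.posSemidef_sqrt
  have hQH : Qᴴ = Q := hQ.1
  have hPQ : Q * Q = P := hP.sqrt_mul_self
  have hcyc : Matrix.trace (M * P) = Matrix.trace (Q * M * Q) := by
    rw [← hPQ, ← Matrix.mul_assoc, Matrix.trace_mul_cycle]
  rw [hcyc, ← hPQ, Matrix.trace, Matrix.trace, Complex.re_sum, Complex.re_sum]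
  apply Finset.sum_le_sum
  intro j _
  set q : Fin N → ℂ := fun i => Q i j with hq
  have hstarq : ∀ i, star (q i) = Q j i := by
    intro i
    have := congrFun (congrFun hQH j) i
    rw [Matrix.conjTranspose_apply] at this
    simpa [hq] using this
  have e1 : (Q * M * Q).diag j = dotProduct (star q) (M *ᵥ q) := by
    rw [Matrix.diag_apply, Matrix.mul_assoc, Matrix.mul_apply, dotProduct]
    refine Finset.sum_congr rfl fun i _ => ?_
    rw [Pi.star_apply, hstarq i]
    congr 1
  have e2 : (Q * Q).diag j = dotProduct (star q) q := by
    rw [Matrix.diag_apply, Matrix.mul_apply, dotProduct]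
    refine Finset.sum_congr rfl fun i _ => ?_
    rw [Pi.star_apply, hstarq i]
  rw [e1, e2]
  exact re_dotProduct_le M hM q


lemma sandwich_mul {P Q R : Matrix (Fin N) (Fin N) ℂ} (hQ : Qᴴ * Q = 1) (a b : Fin N → ℂ) :
    (P * Matrix.diagonal a * Qᴴ) * (Q * Matrix.diagonal b * Rᴴ)
      = P * Matrix.diagonal (a * b) * Rᴴ := by
  have h1 : (P * Matrix.diagonal a * Qᴴ) * (Q * Matrix.diagonal b * Rᴴ)
      = P * (Matrix.diagonal a * ((Qᴴ * Q) * (Matrix.diagonal b * Rᴴ))) := by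
    simp only [Matrix.mul_assoc]
  rw [h1, hQ, Matrix.one_mul, ← Matrix.mul_assoc (Matrix.diagonal a),
    Matrix.diagonal_mul_diagonal, ← Matrix.mul_assoc]
  rfl

lemma sandwich_conjT (P Q : Matrix (Fin N) (Fin N) ℂ) (a : Fin N → ℂ) :
    (P * Matrix.diagonal a * Qᴴ)ᴴ = Q * Matrix.diagonal (star a) * Pᴴ := by
  simp [Matrix.conjTranspose_mul, Matrix.diagonal_conjTranspose, Matrix.mul_assoc]

lemma star_real_coe (r : Fin N → ℝ) :
    star (fun i => ((r i : ℝ) : ℂ)) = fun i => ((r i : ℝ) : ℂ) := by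
  funext i
  simp [Complex.conj_ofReal]

lemma real_coe_mul (r t : Fin N → ℝ) :
    (fun i => ((r i : ℝ) : ℂ)) * (fun i => ((t i : ℝ) : ℂ))
      = fun i => ((r i * t i : ℝ) : ℂ) := by
  funext i
  simp

lemma trace_sandwich (W : Matrix (Fin N) (Fin N) ℂ) (hW : Wᴴ * W = 1) (a : Fin N → ℂ) :
    Matrix.trace (W * Matrix.diagonal a * Wᴴ) = ∑ i, a i := by
  rw [Matrix.trace_mul_cycle, hW, Matrix.one_mul, Matrix.trace_diagonal]

lemma psd_sandwich (W : Matrix (Fin N) (Fin N) ℂ) (r : Fin N → ℝ) (hr : ∀ i, 0 ≤ r i) :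
    (W * Matrix.diagonal (fun i => ((r i : ℝ) : ℂ)) * Wᴴ).PosSemidef := by
  refine Matrix.PosSemidef.mul_mul_conjTranspose_same ?_ W
  refine Matrix.PosSemidef.diagonal ?_
  intro i
  exact Complex.zero_le_real.mpr (hr i)

lemma sqrt_sandwich {H : Matrix (Fin N) (Fin N) ℂ} (hH : H.PosSemidef)
    (W : Matrix (Fin N) (Fin N) ℂ) (hW1 : Wᴴ * W = 1) (d : Fin N → ℝ) (hd : ∀ i, 0 ≤ d i)
    (hHe : H = W * Matrix.diagonal (fun i => ((d i * d i : ℝ) : ℂ)) * Wᴴ) :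
    hH.sqrt = W * Matrix.diagonal (fun i => ((d i : ℝ) : ℂ)) * Wᴴ := by
  refine ((psd_sandwich W d hd).eq_sqrt_of_sq_eq hH ?_).symm
  rw [pow_two, sandwich_mul hW1, real_coe_mul, hHe]


lemma unitary_1 {W : Matrix (Fin N) (Fin N) ℂ} (hW : W ∈ Matrix.unitaryGroup (Fin N) ℂ) :
    Wᴴ * W = 1 := by
  rw [← Matrix.star_eq_conjTranspose]
  exact Matrix.mem_unitaryGroup_iff'.mp hW

lemma unitary_2 {W : Matrix (Fin N) (Fin N) ℂ} (hW : W ∈ Matrix.unitaryGroup (Fin N) ℂ) :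
    W * Wᴴ = 1 := by
  rw [← Matrix.star_eq_conjTranspose]
  exact Matrix.mem_unitaryGroup_iff.mp hW

lemma sqrt_repr {H : Matrix (Fin N) (Fin N) ℂ} (hH : H.PosSemidef) :
    hH.sqrt = (hH.1.eigenvectorUnitary : Matrix (Fin N) (Fin N) ℂ) *
      Matrix.diagonal (fun i => ((Real.sqrt (hH.1.eigenvalues i) : ℝ) : ℂ)) *
      (hH.1.eigenvectorUnitary : Matrix (Fin N) (Fin N) ℂ)ᴴ := by
  rfl

lemma spectral_repr {H : Matrix (Fin N) (Fin N) ℂ} (hH : H.PosSemidef) :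
    H = (hH.1.eigenvectorUnitary : Matrix (Fin N) (Fin N) ℂ) *
      Matrix.diagonal (fun i => ((hH.1.eigenvalues i : ℝ) : ℂ)) *
      (hH.1.eigenvectorUnitary : Matrix (Fin N) (Fin N) ℂ)ᴴ := by
  conv_lhs => rw [hH.1.spectral_theorem]
  congr 1

lemma nuclearNorm_eq (A : Matrix (Fin N) (Fin N) ℂ) :
    nuclearNorm A = ∑ i, Real.sqrt
      ((Matrix.posSemidef_conjTranspose_mul_self A).1.eigenvalues i) := by
  rw [show nuclearNorm A = (Matrix.trace (Matrix.posSemidef_conjTranspose_mul_self A).sqrt).re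
    from rfl, sqrt_repr, trace_sandwich _
    (unitary_1 ((Matrix.posSemidef_conjTranspose_mul_self A).1.eigenvectorUnitary).2),
    Complex.re_sum]
  simp

lemma sqrt_add_le {a ε : ℝ} (ha : 0 ≤ a) (hε : 0 ≤ ε) :
    Real.sqrt (a + ε) ≤ Real.sqrt a + Real.sqrt ε := by
  have h := Real.sqrt_le_sqrt (show a + ε ≤ (Real.sqrt a + Real.sqrt ε)^2 by
    nlinarith [Real.sq_sqrt ha, Real.sq_sqrt hε, Real.sqrt_nonneg a, Real.sqrt_nonneg ε,
      mul_nonneg (Real.sqrt_nonneg a) (Real.sqrt_nonneg ε)])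
  rwa [Real.sqrt_sq (by positivity)] at h


lemma re_trace_le_nuclearNorm (G A : Matrix (Fin N) (Fin N) ℂ)
    (hG : (1 - G * Gᴴ).PosSemidef) :
    (Matrix.trace (Gᴴ * A)).re ≤ nuclearNorm A := by
  have hH : (Aᴴ * A).PosSemidef := Matrix.posSemidef_conjTranspose_mul_self A
  set W : Matrix (Fin N) (Fin N) ℂ := (hH.1.eigenvectorUnitary : Matrix (Fin N) (Fin N) ℂ)
    with hWdef
  have hW1 : Wᴴ * W = 1 := unitary_1 hH.1.eigenvectorUnitary.2
  have hW2 : W * Wᴴ = 1 := unitary_2 hH.1.eigenvectorUnitary.2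
  set lam : Fin N → ℝ := hH.1.eigenvalues with hlamdef
  have hlam : ∀ i, 0 ≤ lam i := hH.eigenvalues_nonneg
  have hspec : Aᴴ * A = W * Matrix.diagonal (fun i => ((lam i : ℝ) : ℂ)) * Wᴴ :=
    spectral_repr hH
  have hnn : nuclearNorm A = ∑ i, Real.sqrt (lam i) := nuclearNorm_eq A
  have main : ∀ ε : ℝ, 0 < ε →
      (Matrix.trace (Gᴴ * A)).re ≤ nuclearNorm A + N * Real.sqrt ε := by
    intro ε hε
    set d : Fin N → ℝ := fun i => Real.sqrt (lam i + ε) with hddef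
    have hd0 : ∀ i, 0 < d i := fun i => Real.sqrt_pos.mpr (by linarith [hlam i])
    set S := W * Matrix.diagonal (fun i => ((d i : ℝ) : ℂ)) * Wᴴ with hSdef
    set T := W * Matrix.diagonal (fun i => (((d i)⁻¹ : ℝ) : ℂ)) * Wᴴ with hTdef
    have hSpsd : S.PosSemidef := psd_sandwich W d (fun i => (hd0 i).le)
    have hTpsd : T.PosSemidef := psd_sandwich W _ (fun i => (inv_nonneg.mpr (hd0 i).le))
    have hT : Tᴴ = T := hTpsd.1
    have hTS : T * S = 1 := by
      rw [hTdef, hSdef, sandwich_mul hW1, real_coe_mul]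
      have hfun : (fun i => (((d i)⁻¹ * d i : ℝ) : ℂ)) = fun _ => (1 : ℂ) := by
        funext i; rw [inv_mul_cancel₀ (hd0 i).ne']; simp
      rw [hfun, Matrix.diagonal_one, Matrix.mul_one, hW2]
    have hST : S * T = 1 := by
      rw [hTdef, hSdef, sandwich_mul hW1, real_coe_mul]
      have hfun : (fun i => ((d i * (d i)⁻¹ : ℝ) : ℂ)) = fun _ => (1 : ℂ) := by
        funext i; rw [mul_inv_cancel₀ (hd0 i).ne']; simp
      rw [hfun, Matrix.diagonal_one, Matrix.mul_one, hW2]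
    set E : Matrix (Fin N) (Fin N) ℂ := Matrix.diagonal (fun _ => ((ε : ℝ) : ℂ)) with hEdef
    have hEpsd : E.PosSemidef :=
      Matrix.PosSemidef.diagonal (fun i => Complex.zero_le_real.mpr hε.le)
    have hSS : S * S = Aᴴ * A + E := by
      rw [hSdef, sandwich_mul hW1, real_coe_mul]
      have hfun : (fun i => ((d i * d i : ℝ) : ℂ))
          = (fun i => (((lam i : ℝ) : ℂ) + ((ε : ℝ) : ℂ))) := by
        funext i
        rw [hddef]
        rw [Real.mul_self_sqrt (by linarith [hlam i])]
        push_cast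
        ring
      rw [hfun, ← Matrix.diagonal_add, Matrix.mul_add, Matrix.add_mul, ← hspec, hEdef]
      refine congrArg (Aᴴ * A + ·) ?_
      rw [show Matrix.diagonal (fun _ : Fin N => ((ε : ℝ) : ℂ)) = ((ε : ℝ) : ℂ) • 1 from
        (Matrix.smul_one_eq_diagonal _).symm]
      rw [Matrix.mul_smul, Matrix.mul_one, Matrix.smul_mul, hW2]
    -- the approximate polar factor
    set Wp := A * T with hWpdef
    have hWpS : Wp * S = A := by rw [hWpdef, Matrix.mul_assoc, hTS, Matrix.mul_one]
    have hWpWp : 1 - Wpᴴ * Wp = Tᴴ * E * T := by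
      have h1 : Tᴴ * (S * S) * T = 1 := by
        rw [hT]
        calc T * (S * S) * T = (T * S) * (S * T) := by
              simp only [Matrix.mul_assoc]
          _ = 1 := by rw [hTS, hST, Matrix.one_mul]
      have h2 : Wpᴴ * Wp = Tᴴ * (Aᴴ * A) * T := by
        rw [hWpdef, Matrix.conjTranspose_mul]
        simp only [Matrix.mul_assoc]
      rw [h2, ← h1, hSS, Matrix.mul_add, Matrix.add_mul]
      abel
    have hWpWppsd : (1 - Wpᴴ * Wp).PosSemidef := by
      rw [hWpWp]; exact hEpsd.conjTranspose_mul_mul_same T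
    set M := Gᴴ * Wp with hMdef
    have hMM : (1 - Mᴴ * M).PosSemidef := by
      have h3 : Mᴴ * M = Wpᴴ * (G * Gᴴ) * Wp := by
        rw [hMdef, Matrix.conjTranspose_mul, Matrix.conjTranspose_conjTranspose]
        simp only [Matrix.mul_assoc]
      have h4 : 1 - Mᴴ * M = Wpᴴ * (1 - G * Gᴴ) * Wp + (1 - Wpᴴ * Wp) := by
        rw [h3, Matrix.mul_sub, Matrix.sub_mul, Matrix.mul_one]
        abel
      rw [h4]
      exact (hG.conjTranspose_mul_mul_same Wp).add hWpWppsd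
    have htr : Matrix.trace (Gᴴ * A) = Matrix.trace (M * S) := by
      rw [hMdef, ← hWpS]
      simp only [Matrix.mul_assoc]
    have hb := re_trace_mul_le M S hMM hSpsd
    rw [← htr] at hb
    have htrS : (Matrix.trace S).re = ∑ i, d i := by
      rw [hSdef, trace_sandwich W hW1, Complex.re_sum]
      simp
    refine hb.trans ?_
    rw [htrS, hnn]
    have : ∑ i, d i ≤ ∑ i, (Real.sqrt (lam i) + Real.sqrt ε) :=
      Finset.sum_le_sum fun i _ => sqrt_add_le (hlam i) hε.le
    rw [Finset.sum_add_distrib, Finset.sum_const, Finset.card_univ, Fintype.card_fin,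
      nsmul_eq_mul] at this
    exact this
  refine le_of_forall_pos_le_add fun δ hδ => ?_
  have hN1 : (0:ℝ) < (N:ℝ) + 1 := by positivity
  have h0 := main ((δ / ((N:ℝ) + 1))^2) (by positivity)
  rw [Real.sqrt_sq (by positivity)] at h0
  refine h0.trans ?_
  have hle : (N:ℝ) * (δ / ((N:ℝ) + 1)) ≤ δ := by
    rw [mul_div_assoc', div_le_iff₀ hN1]
    nlinarith [Nat.cast_nonneg (α := ℝ) N]
  linarith


lemma frob_sq (A : Matrix (Fin N) (Fin N) ℂ) : frobNorm A ^ 2 = F2 A :=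
  Real.sq_sqrt (F2_nonneg A)

end SVS

open SVS

/-- Singular value shrinkage: if `X = U Σ Vᴴ` is an SVD of `X` with
`Σ = diag(σ₁,…,σ_N)` and `τ ≥ 0`, then `Z = U D_τ(Σ) Vᴴ` with
`D_τ(Σ) = diag(max(σᵢ − τ, 0))` is the unique minimizer of
`Z' ↦ τ‖Z'‖_* + (1/2)‖X − Z'‖_F²`. -/
theorem singular_value_shrinkage_prox {N : ℕ}
    (U V : Matrix (Fin N) (Fin N) ℂ)
    (hU : U ∈ Matrix.unitaryGroup (Fin N) ℂ)
    (hV : V ∈ Matrix.unitaryGroup (Fin N) ℂ)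
    (σ : Fin N → ℝ) (hσ : ∀ i, 0 ≤ σ i)
    (X : Matrix (Fin N) (Fin N) ℂ)
    (hX : X = U * Matrix.diagonal (fun i => (σ i : ℂ)) * Vᴴ)
    (τ : ℝ) (hτ : 0 ≤ τ)
    (Z : Matrix (Fin N) (Fin N) ℂ)
    (hZ : Z = U * Matrix.diagonal (fun i => (max (σ i - τ) 0 : ℝ) : Fin N → ℂ) * Vᴴ) :
    (∀ Z' : Matrix (Fin N) (Fin N) ℂ,
        τ * nuclearNorm Z + (1 / 2) * frobNorm (X - Z) ^ 2 ≤
          τ * nuclearNorm Z' + (1 / 2) * frobNorm (X - Z') ^ 2) ∧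
    (∀ Z' : Matrix (Fin N) (Fin N) ℂ,
        τ * nuclearNorm Z' + (1 / 2) * frobNorm (X - Z') ^ 2 =
          τ * nuclearNorm Z + (1 / 2) * frobNorm (X - Z) ^ 2 → Z' = Z) := by
  have hU1 : Uᴴ * U = 1 := unitary_1 hU
  have hU2 : U * Uᴴ = 1 := unitary_2 hU
  have hV1 : Vᴴ * V = 1 := unitary_1 hV
  have hV2 : V * Vᴴ = 1 := unitary_2 hV
  set s : Fin N → ℝ := fun i => max (σ i - τ) 0 with hsdef
  set m : Fin N → ℝ := fun i => min (σ i) τ with hmdef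
  have hs : ∀ i, 0 ≤ s i := fun i => le_max_right _ _
  have hm0 : ∀ i, 0 ≤ m i := fun i => le_min (hσ i) hτ
  have hmτ : ∀ i, m i ≤ τ := fun i => min_le_right _ _
  have hsm : ∀ i, σ i - s i = m i := by
    intro i
    rcases le_total (σ i) τ with h | h
    · rw [hsdef, hmdef]
      simp only
      rw [max_eq_right (by linarith), min_eq_left h, sub_zero]
    · rw [hsdef, hmdef]
      simp only
      rw [max_eq_left (by linarith), min_eq_right h]
      ring
  -- Z with real-cast diagonal
  have hZ' : Z = U * Matrix.diagonal (fun i => ((s i : ℝ) : ℂ)) * Vᴴ := hZ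
  have hXZ : X - Z = U * Matrix.diagonal (fun i => ((m i : ℝ) : ℂ)) * Vᴴ := by
    rw [hX, hZ', ← Matrix.sub_mul, ← Matrix.mul_sub, Matrix.diagonal_sub]
    have : (fun i => (((σ i : ℝ) : ℂ) - ((s i : ℝ) : ℂ)))
        = fun i => ((m i : ℝ) : ℂ) := by
      funext i
      rw [← hsm i]
      push_cast
      ring
    rw [this]
  -- nuclear norm of Z
  have hZHZ : Zᴴ * Z = V * Matrix.diagonal (fun i => ((s i * s i : ℝ) : ℂ)) * Vᴴ := by
    conv_lhs => rw [hZ']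
    rw [sandwich_conjT, star_real_coe, sandwich_mul hU1, real_coe_mul]
  have hnnZ : nuclearNorm Z = ∑ i, s i := by
    rw [show nuclearNorm Z = (Matrix.trace (Matrix.posSemidef_conjTranspose_mul_self Z).sqrt).re
      from rfl, sqrt_sandwich (Matrix.posSemidef_conjTranspose_mul_self Z) V hV1 s hs hZHZ,
      trace_sandwich V hV1, Complex.re_sum]
    simp
  -- key subgradient inequality
  have key : ∀ Z' : Matrix (Fin N) (Fin N) ℂ,
      τ * nuclearNorm Z + (Matrix.trace ((X - Z)ᴴ * (Z' - Z))).re ≤ τ * nuclearNorm Z' := by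
    intro Z'
    rcases eq_or_lt_of_le hτ with hτ0 | hτpos
    · -- τ = 0 : then m = 0 and X - Z = 0
      have hm0' : ∀ i, m i = 0 := by
        intro i
        rw [hmdef]
        simp only
        rw [← hτ0, min_eq_right (hσ i)]
      have hXZ0 : X - Z = 0 := by
        rw [hXZ]
        have : (fun i => ((m i : ℝ) : ℂ)) = fun _ => (0 : ℂ) := by
          funext i; rw [hm0' i]; simp
        rw [this, Matrix.diagonal_zero, Matrix.mul_zero, Matrix.zero_mul]
      rw [hXZ0, ← hτ0]
      simp
    · -- τ > 0
      have hτne : τ ≠ 0 := hτpos.ne'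
      set g : Fin N → ℝ := fun i => m i / τ with hgdef
      have hg0 : ∀ i, 0 ≤ g i := fun i => div_nonneg (hm0 i) hτ
      have hg1 : ∀ i, g i ≤ 1 := fun i => by
        rw [hgdef]; exact div_le_one_of_le₀ (hmτ i) hτ
      set G : Matrix (Fin N) (Fin N) ℂ :=
        U * Matrix.diagonal (fun i => ((g i : ℝ) : ℂ)) * Vᴴ with hGdef
      have hGH : Gᴴ = V * Matrix.diagonal (fun i => ((g i : ℝ) : ℂ)) * Uᴴ := by
        rw [hGdef, sandwich_conjT, star_real_coe]
      have hGG : G * Gᴴ = U * Matrix.diagonal (fun i => ((g i * g i : ℝ) : ℂ)) * Uᴴ := by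
        rw [hGdef, hGH, sandwich_mul hV1, real_coe_mul]
      have h1GG : (1 - G * Gᴴ).PosSemidef := by
        have hone : (1 : Matrix (Fin N) (Fin N) ℂ)
            = U * Matrix.diagonal (fun i => ((1 : ℝ) : ℂ)) * Uᴴ := by
          rw [show (fun _ : Fin N => ((1:ℝ):ℂ)) = fun _ : Fin N => (1:ℂ) by norm_num,
            Matrix.diagonal_one, Matrix.mul_one, hU2]
        rw [hGG, hone, ← Matrix.sub_mul, ← Matrix.mul_sub, Matrix.diagonal_sub]
        have : (fun i : Fin N => ((((1:ℝ)):ℂ) - ((g i * g i : ℝ) : ℂ)))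
            = fun i => ((1 - g i * g i : ℝ) : ℂ) := by
          funext i
          push_cast
          ring
        rw [this]
        exact psd_sandwich U _ (fun i => by nlinarith [hg0 i, hg1 i])
      -- scaling : (X - Z)ᴴ = τ • Gᴴ
      have hsmul : (X - Z)ᴴ = ((τ : ℝ) : ℂ) • Gᴴ := by
        have hD : Matrix.diagonal (fun i => ((m i : ℝ) : ℂ))
            = ((τ : ℝ) : ℂ) • Matrix.diagonal (fun i => ((g i : ℝ) : ℂ)) := by
          have hfun : (fun i => ((m i : ℝ) : ℂ))
              = ((τ : ℝ) : ℂ) • (fun i => ((g i : ℝ) : ℂ)) := by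
            funext i
            rw [Pi.smul_apply, smul_eq_mul, hgdef]
            push_cast
            field_simp
          rw [hfun, Matrix.diagonal_smul]
        rw [hXZ, sandwich_conjT, star_real_coe, hGH, hD, Matrix.mul_smul, Matrix.smul_mul]
      have htrscale : ∀ B : Matrix (Fin N) (Fin N) ℂ,
          (Matrix.trace ((X - Z)ᴴ * B)).re = τ * (Matrix.trace (Gᴴ * B)).re := by
        intro B
        rw [hsmul, Matrix.smul_mul, Matrix.trace_smul, smul_eq_mul]
        rw [Complex.mul_re]
        simp
      -- trace against Z gives the nuclear norm
      have htrZ : (Matrix.trace (Gᴴ * Z)).re = nuclearNorm Z := by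
        have : Gᴴ * Z = V * Matrix.diagonal (fun i => ((g i * s i : ℝ) : ℂ)) * Vᴴ := by
          rw [hGH]
          conv_lhs => rw [hZ']
          rw [sandwich_mul hU1, real_coe_mul]
        rw [this, trace_sandwich V hV1, Complex.re_sum, hnnZ]
        have hgs : ∀ i, g i * s i = s i := by
          intro i
          rcases le_total (σ i) τ with h | h
          · have : s i = 0 := by rw [hsdef]; simp only; rw [max_eq_right (by linarith)]
            rw [this, mul_zero]
          · have : g i = 1 := by
              rw [hgdef, hmdef]; simp only; rw [min_eq_right h]; field_simp
            rw [this, one_mul]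
        refine Finset.sum_congr rfl fun i _ => ?_
        rw [hgs i]
        simp
      have hdual := re_trace_le_nuclearNorm G Z' h1GG
      have hsplit : (Matrix.trace ((X - Z)ᴴ * (Z' - Z))).re
          = τ * (Matrix.trace (Gᴴ * Z')).re - τ * nuclearNorm Z := by
        rw [Matrix.mul_sub, Matrix.trace_sub, Complex.sub_re, htrscale Z']
        rw [show (Matrix.trace ((X - Z)ᴴ * Z)).re = τ * (Matrix.trace (Gᴴ * Z)).re from
          htrscale Z, htrZ]
      rw [hsplit]
      have := mul_le_mul_of_nonneg_left hdual hτ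
      linarith
  -- assemble
  constructor
  · intro Z'
    have hdiff : X - Z' = (X - Z) - (Z' - Z) := by abel
    have hEx : F2 (X - Z') = F2 (X - Z)
        - 2 * (Matrix.trace ((X - Z)ᴴ * (Z' - Z))).re + F2 (Z' - Z) := by
      rw [hdiff, F2_sub_expand]
    rw [frob_sq, frob_sq, hEx]
    have h1 := key Z'
    have h2 := F2_nonneg (Z' - Z)
    linarith
  · intro Z' heq
    have hdiff : X - Z' = (X - Z) - (Z' - Z) := by abel
    have hEx : F2 (X - Z') = F2 (X - Z)
        - 2 * (Matrix.trace ((X - Z)ᴴ * (Z' - Z))).re + F2 (Z' - Z) := by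
      rw [hdiff, F2_sub_expand]
    rw [frob_sq, frob_sq, hEx] at heq
    have h1 := key Z'
    have h2 := F2_nonneg (Z' - Z)
    have h3 : F2 (Z' - Z) = 0 := by linarith
    have h4 := F2_eq_zero h3
    rw [sub_eq_zero] at h4
    exact h4
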